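/- For every element (N, ν) of Aut(S), the bijection ν maps the set of four augmented triads {C_aug, G_aug, D_aug, F_aug} onto itself (equivalently, if x ∈ X is an augmented triad then ν(x) is an augmented triad). -/
import Mathlib


namespace CubeDance

/-- The set `X` of the 12 major triads, 12 minor triads, and 4 augmented triads. -/
inductive Triad : Type
  | maj : ZMod 12 → Triad
  | min : ZMod 12 → Triad
  | aug : ZMod 4 → Triad
  deriving DecidableEq

/-- Binary relations on `X`. -/
abbrev RelM : Type := Triad → Triad → Prop

/-- Binary relations on `X` form a monoid under relational composition,
with identity the diagonal relation. -/
instance : Monoid RelM where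
  mul R S := fun p q => ∃ r, R p r ∧ S r q
  one := fun p q => p = q
  mul_assoc R S T := by
    funext p q
    apply propext
    constructor
    · rintro ⟨r, ⟨s, h1, h2⟩, h3⟩
      exact ⟨s, h1, r, h2, h3⟩
    · rintro ⟨s, h1, r, h2, h3⟩
      exact ⟨r, ⟨s, h1, h2⟩, h3⟩
  one_mul R := by
    funext p q
    apply propext
    constructor
    · rintro ⟨r, rfl, h⟩
      exact h
    · intro h
      exact ⟨p, rfl, h⟩
  mul_one R := by
    funext p q
    apply propext
    constructor
    · rintro ⟨r, h, rfl⟩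
      exact h
    · intro h
      exact ⟨q, h, rfl⟩

/-- The relation `U`, relating `a_aug` with `x_M` whenever `x ≡ a (mod 4)` and
`a_aug` with `x_m` whenever `x ≡ a + 1 (mod 4)`. -/
def U : RelM := fun p q =>
  match p, q with
  | .aug a, .maj x => (x.val : ZMod 4) = a
  | .maj x, .aug a => (x.val : ZMod 4) = a
  | .aug a, .min x => (x.val : ZMod 4) = a + 1
  | .min x, .aug a => (x.val : ZMod 4) = a + 1
  | _, _ => False

/-- The relation `P`, relating `x_M` with `x_m`, and each augmented triad with itself. -/
def P : RelM := fun p q =>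
  match p, q with
  | .maj x, .min y => x = y
  | .min x, .maj y => x = y
  | .aug a, .aug b => a = b
  | _, _ => False

/-- The relation `L`, relating `x_M` with `(x+4)_m`, and each augmented triad with itself. -/
def L : RelM := fun p q =>
  match p, q with
  | .maj x, .min y => y = x + 4
  | .min y, .maj x => y = x + 4
  | .aug a, .aug b => a = b
  | _, _ => False

/-- The monoid `M_{U,P,L}` generated by the relations `U`, `P` and `L`. -/
def M : Submonoid RelM := Submonoid.closure {U, P, L}

lemma U_mem : U ∈ M := Submonoid.subset_closure (Set.mem_insert _ _)

lemma P_mem : P ∈ M :=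
  Submonoid.subset_closure (Set.mem_insert_of_mem _ (Set.mem_insert _ _))

lemma L_mem : L ∈ M :=
  Submonoid.subset_closure (Set.mem_insert_of_mem _ (Set.mem_insert_of_mem _ rfl))


/-- The compatibility condition defining `Aut(S)`: a pair `(N, ν)` of a monoid automorphism
of `M` and a permutation of `X` such that `p R q` implies `ν(p) N(R) ν(q)` for every
`R ∈ M` and all `p, q ∈ X`. -/
def compat (x : MulAut M × Equiv.Perm Triad) : Prop :=
  ∀ R : M, ∀ pt q : Triad, (↑R : RelM) pt q → (↑(x.1 R) : RelM) (x.2 pt) (x.2 q)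

/-! ### Auxiliary machinery -/

lemma mul_def (R S : RelM) (p q : Triad) : (R * S) p q ↔ ∃ r, R p r ∧ S r q := Iff.rfl

lemma one_def (p q : Triad) : (1 : RelM) p q ↔ p = q := Iff.rfl

/-- The invariant satisfied by every word containing `U`: images are closed under `+4`. -/
def Pi4 (R : RelM) : Prop :=
  ∀ p (y : ZMod 12), (R p (.maj y) → R p (.maj (y + 4))) ∧ (R p (.min y) → R p (.min (y + 4)))

/-- The explicit family of "dihedral" relations containing `1`, `P`, `L`. -/
def rel (ε : Bool) (t : ZMod 12) : RelM := fun p q =>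
  match ε, p with
  | false, .maj x => q = .maj (x + t)
  | true, .maj x => q = .min (x + t)
  | false, .min x => q = .min (x - t)
  | true, .min x => q = .maj (x - t)
  | _, .aug a => q = .aug a

def Good (R : RelM) : Prop := Pi4 R ∨ ∃ ε t, R = rel ε t

lemma key4 : ∀ y : ZMod 12, (((y + 4 : ZMod 12).val : ZMod 4)) = (y.val : ZMod 4) := by decide

lemma pi4_U : Pi4 U := by
  intro p y
  constructor
  · intro h
    cases p with
    | maj x => exact absurd h (by simp [U])
    | min x => exact absurd h (by simp [U])
    | aug a => simp only [U] at h ⊢; rw [key4]; exact h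
  · intro h
    cases p with
    | maj x => exact absurd h (by simp [U])
    | min x => exact absurd h (by simp [U])
    | aug a => simp only [U] at h ⊢; rw [key4]; exact h

lemma pi4_mul_left (S R : RelM) (h : Pi4 R) : Pi4 (S * R) := by
  intro p y
  constructor
  · rintro ⟨r, h1, h2⟩; exact ⟨r, h1, (h r y).1 h2⟩
  · rintro ⟨r, h1, h2⟩; exact ⟨r, h1, (h r y).2 h2⟩

lemma pi4_mul_rel (R : RelM) (δ : Bool) (s : ZMod 12) (h : Pi4 R) : Pi4 (R * rel δ s) := by
  intro p y
  constructor
  · rintro ⟨r, h1, h2⟩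
    cases r with
    | maj x =>
      cases δ with
      | false =>
        obtain rfl : y = x + s := Triad.maj.inj h2
        exact ⟨.maj (x + 4), (h p x).1 h1, congrArg Triad.maj (by ring)⟩
      | true => exact absurd (show Triad.maj y = Triad.min (x + s) from h2) (by simp)
    | min x =>
      cases δ with
      | true =>
        obtain rfl : y = x - s := Triad.maj.inj h2
        exact ⟨.min (x + 4), (h p x).2 h1, congrArg Triad.maj (by ring)⟩
      | false => exact absurd (show Triad.maj y = Triad.min (x - s) from h2) (by simp)
    | aug a =>
      cases δ <;> exact absurd (show Triad.maj y = Triad.aug a from h2) (by simp)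
  · rintro ⟨r, h1, h2⟩
    cases r with
    | maj x =>
      cases δ with
      | true =>
        obtain rfl : y = x + s := Triad.min.inj h2
        exact ⟨.maj (x + 4), (h p x).1 h1, congrArg Triad.min (by ring)⟩
      | false => exact absurd (show Triad.min y = Triad.maj (x + s) from h2) (by simp)
    | min x =>
      cases δ with
      | false =>
        obtain rfl : y = x - s := Triad.min.inj h2
        exact ⟨.min (x + 4), (h p x).2 h1, congrArg Triad.min (by ring)⟩
      | true => exact absurd (show Triad.min y = Triad.maj (x - s) from h2) (by simp)
    | aug a =>
      cases δ <;> exact absurd (show Triad.min y = Triad.aug a from h2) (by simp)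

lemma rel_mul (ε δ : Bool) (t s : ZMod 12) :
    rel ε t * rel δ s = rel (xor ε δ) (t + if ε then -s else s) := by
  funext p q
  apply propext
  cases p with
  | maj x =>
    cases ε <;> cases δ <;>
      simp [mul_def, rel] <;> constructor <;> (intro h; rw [h]) <;> ring_nf
  | min x =>
    cases ε <;> cases δ <;>
      simp [mul_def, rel] <;> constructor <;> (intro h; rw [h]) <;> ring_nf
  | aug a =>
    cases ε <;> cases δ <;> simp [mul_def, rel] <;> exact eq_comm

lemma rel_false_zero : rel false 0 = 1 := by
  funext p q
  apply propext
  cases p <;> simp [rel, one_def, eq_comm]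

lemma P_eq_rel : P = rel true 0 := by
  funext p q
  apply propext
  cases p <;> cases q <;> simp [P, rel, eq_comm]

lemma L_eq_rel : L = rel true 4 := by
  funext p q
  apply propext
  cases p with
  | maj x => cases q <;> simp [L, rel, eq_comm]
  | min x =>
    cases q <;> simp [L, rel]
    constructor
    · rintro rfl; ring
    · intro h; rw [h]; ring
  | aug a => cases q <;> simp [L, rel] <;> exact eq_comm

lemma good_mul {R S : RelM} (hR : Good R) (hS : Good S) : Good (R * S) := by
  rcases hS with hS | ⟨δ, s, rfl⟩
  · exact Or.inl (pi4_mul_left R S hS)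
  · rcases hR with hR | ⟨ε, t, rfl⟩
    · exact Or.inl (pi4_mul_rel R δ s hR)
    · exact Or.inr ⟨_, _, rel_mul ε δ t s⟩

lemma good_mem {R : RelM} (h : R ∈ M) : Good R := by
  induction h using Submonoid.closure_induction with
  | mem x hx =>
    rcases hx with rfl | rfl | rfl
    · exact Or.inl pi4_U
    · exact Or.inr ⟨true, 0, P_eq_rel⟩
    · exact Or.inr ⟨true, 4, L_eq_rel⟩
  | one => exact Or.inr ⟨false, 0, rel_false_zero.symm⟩
  | mul a b _ _ ha hb => exact good_mul ha hb

lemma no_inv_pi4 (S : RelM) (hs : S * S = 1) (hPi : Pi4 S) : False := by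
  have hSS : ∀ p q : Triad, (∃ r, S p r ∧ S r q) ↔ p = q := by
    intro p q
    rw [← mul_def, hs, one_def]
  have ent : ∀ p, ∃ r, S p r ∧ S r p := fun p => (hSS p p).mpr rfl
  have symm : ∀ p r, S p r → S r p := by
    intro p r h
    obtain ⟨t, h1, h2⟩ := ent r
    have : p = t := (hSS p t).mp ⟨r, h, h1⟩
    rw [this]; exact h1
  have fn : ∀ p q q', S p q → S p q' → q = q' := fun p q q' h h' =>
    (hSS q q').mp ⟨p, symm p q h, h'⟩
  have four_ne : (4 : ZMod 12) ≠ 0 := by decide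
  have all_aug : ∀ p r, S p r → ∃ b, r = Triad.aug b := by
    intro p r h
    cases r with
    | maj y =>
      have h' := (hPi p y).1 h
      have := fn p _ _ h h'
      simp only [Triad.maj.injEq] at this
      exact absurd (left_eq_add.mp this) four_ne
    | min y =>
      have h' := (hPi p y).2 h
      have := fn p _ _ h h'
      simp only [Triad.min.injEq] at this
      exact absurd (left_eq_add.mp this) four_ne
    | aug b => exact ⟨b, rfl⟩
  have hex : ∀ v : ZMod 12, ∃ b, S (.maj v) (.aug b) := by
    intro v
    obtain ⟨r, h1, _⟩ := ent (.maj v)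
    obtain ⟨b, rfl⟩ := all_aug _ _ h1
    exact ⟨b, h1⟩
  choose f hf using hex
  have finj : Function.Injective f := by
    intro v w h
    have h1 := hf v
    have h2 := hf w
    rw [h] at h1
    have : Triad.maj v = Triad.maj w := (hSS _ _).mp ⟨_, h1, symm _ _ h2⟩
    simpa using this
  have := Fintype.card_le_of_injective f finj
  simp [ZMod.card] at this

lemma P_mul_P : P * P = (1 : RelM) := by
  funext p q
  apply propext
  rw [mul_def, one_def]
  constructor
  · rintro ⟨r, h1, h2⟩
    cases p <;> cases r <;> cases q <;> simp_all [P]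
  · rintro rfl
    cases p with
    | maj x => exact ⟨.min x, rfl, rfl⟩
    | min x => exact ⟨.maj x, rfl, rfl⟩
    | aug a => exact ⟨.aug a, rfl, rfl⟩

lemma P_ne_one : P ≠ (1 : RelM) := by
  intro h
  have : P (.maj 0) (.min 0) := rfl
  rw [h] at this
  exact absurd (one_def _ _ |>.mp this) (by simp)

/-- For every `(N, ν)` in `Aut(S)`, the bijection `ν` maps augmented triads to
augmented triads. -/
theorem autS_maps_aug_to_aug (x : MulAut M × Equiv.Perm Triad) (hx : compat x) :
    ∀ a : ZMod 4, ∃ b : ZMod 4, x.2 (Triad.aug a) = Triad.aug b := by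
  intro a
  have hP2 : ((⟨P, P_mem⟩ : M) * ⟨P, P_mem⟩ : M) = 1 := Subtype.ext P_mul_P
  set S : M := x.1 ⟨P, P_mem⟩ with hSdef
  have hS2 : (S : RelM) * S = 1 := by
    have h : S * S = (1 : M) := by rw [hSdef, ← map_mul, hP2, map_one]
    exact congrArg Subtype.val h
  have hgood : Good (S : RelM) := good_mem S.2
  rcases hgood with hPi | ⟨ε, t, hrel⟩
  · exact (no_inv_pi4 _ hS2 hPi).elim
  · have hfix : (S : RelM) (x.2 (.aug a)) (x.2 (.aug a)) :=
      hx ⟨P, P_mem⟩ (.aug a) (.aug a) rfl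
    have hSne : (S : RelM) ≠ 1 := by
      intro h
      have h1 : S = (1 : M) := Subtype.ext h
      have h2 : (⟨P, P_mem⟩ : M) = 1 := x.1.injective (by rw [← hSdef, h1, map_one])
      exact P_ne_one (congrArg Subtype.val h2)
    rw [hrel] at hfix hSne
    rcases e : x.2 (Triad.aug a) with y | y | b
    · exfalso
      rw [e] at hfix
      cases ε with
      | true => exact absurd (show Triad.maj y = Triad.min (y + t) from hfix) (by simp)
      | false =>
        obtain rfl : t = 0 := left_eq_add.mp (Triad.maj.inj hfix)
        exact hSne rel_false_zero
    · exfalso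
      rw [e] at hfix
      cases ε with
      | true => exact absurd (show Triad.min y = Triad.maj (y - t) from hfix) (by simp)
      | false =>
        obtain rfl : t = 0 := sub_eq_self.mp (Triad.min.inj hfix).symm
        exact hSne rel_false_zero
    · exact ⟨b, rfl⟩


end CubeDance
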